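/- Let A ∈ (FW^n_{n-1})*, i.e., a symmetric n×n matrix all of whose (n-1)×(n-1) principal submatrices are psd. If some (n-1)×(n-1) principal submatrix of A has rank at most n−3, then A is positive semidefinite. -/

import Mathlib

open Matrix

/-- `A` has factor width at most `k`: `A = V * Vᵀ` where every column of `V`
has at most `k` nonzero entries. -/
def HasFactorWidthLE {ι : Type*} [Fintype ι] (A : Matrix ι ι ℝ) (k : ℕ) : Prop :=
  ∃ (m : ℕ) (V : Matrix ι (Fin m) ℝ),
    A = V * Vᵀ ∧ ∀ j, {i | V i j ≠ 0}.ncard ≤ k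

/-- The cone `FW^n_k` of psd `n × n` matrices of factor width at most `k`. -/
def FW (n k : ℕ) : Set (Matrix (Fin n) (Fin n) ℝ) :=
  {A | A.PosSemidef ∧ HasFactorWidthLE A k}

/-- The principal submatrix of `A` indexed by the finite set `K`. -/
def principalSub {ι : Type*} (A : Matrix ι ι ℝ) (K : Finset ι) :
    Matrix K K ℝ :=
  A.submatrix (fun i => (i : ι)) (fun j => (j : ι))

/-- The cone `(FW^n_k)^*`: symmetric matrices all of whose `k × k` principal
submatrices are psd. -/
def FWdual (n k : ℕ) : Set (Matrix (Fin n) (Fin n) ℝ) :=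
  {A | A.IsSymm ∧ ∀ K : Finset (Fin n), K.card = k → (principalSub A K).PosSemidef}

/-- The dual cone (within symmetric matrices) with respect to the trace inner
product `⟨Y, X⟩ = trace (Y * Xᵀ)`. -/
def dualSet {n : ℕ} (C : Set (Matrix (Fin n) (Fin n) ℝ)) :
    Set (Matrix (Fin n) (Fin n) ℝ) :=
  {Y | Y.IsSymm ∧ ∀ X ∈ C, 0 ≤ (Y * Xᵀ).trace}

/-- `A` spans an extreme ray of the cone `C`. -/
def SpansExtremeRay {E : Type*} [AddCommMonoid E] [Module ℝ E]
    (C : Set E) (A : E) : Prop :=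
  A ∈ C ∧ A ≠ 0 ∧ ∀ X Y, X ∈ C → Y ∈ C → A = X + Y →
    ∃ a b : ℝ, 0 ≤ a ∧ 0 ≤ b ∧ X = a • A ∧ Y = b • A

/-- `p` is a sum of squares of `k`-nomials (polynomials with at most `k` monomials). -/
def IsSOkS {n : ℕ} (k : ℕ) (p : MvPolynomial (Fin n) ℝ) : Prop :=
  ∃ (m : ℕ) (q : Fin m → MvPolynomial (Fin n) ℝ),
    (∀ i, (q i).support.card ≤ k) ∧ p = ∑ i, (q i) ^ 2

lemma quad_restrict {n : ℕ} (A : Matrix (Fin n) (Fin n) ℝ) (K : Finset (Fin n))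
    (x : Fin n → ℝ) (hx : ∀ i ∉ K, x i = 0) :
    x ⬝ᵥ (A *ᵥ x) = (fun i : K => x i) ⬝ᵥ (principalSub A K *ᵥ fun i : K => x i) := by
  simp only [dotProduct, mulVec, principalSub, submatrix_apply]
  rw [Finset.sum_coe_sort K (fun i => x i * ∑ j : K, A i j * x j)]
  rw [← Finset.sum_subset (Finset.subset_univ K)
    (fun i _ hi => by rw [hx i hi, zero_mul])]
  refine Finset.sum_congr rfl fun i _ => ?_
  congr 1
  rw [Finset.sum_coe_sort K (fun j => A i j * x j)]
  exact (Finset.sum_subset (Finset.subset_univ K)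
    (fun j _ hj => by rw [hx j hj, mul_zero])).symm


/-- if `A ∈ (FW^n_{n-1})^*` and some `(n-1) × (n-1)` principal submatrix
of `A` has rank at most `n - 3`, then `A` is psd. -/
theorem stmt6 (n : ℕ) (hn : 3 ≤ n) (A : Matrix (Fin n) (Fin n) ℝ)
    (hA : A ∈ FWdual n (n - 1))
    (I : Finset (Fin n)) (hI : I.card = n - 1)
    (hr : (principalSub A I).rank ≤ n - 3) :
    A.PosSemidef := by
  obtain ⟨hsymm, hpsd⟩ := hA
  -- the missing index
  have hcompl : Iᶜ.card = 1 := by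
    rw [Finset.card_compl, hI, Fintype.card_fin]; omega
  obtain ⟨i0, hi0⟩ := Finset.card_eq_one.mp hcompl
  have hnotI : ∀ i : Fin n, i ∉ I → i = i0 := fun i hi => by
    have : i ∈ Iᶜ := Finset.mem_compl.mpr hi
    rw [hi0] at this; exact Finset.mem_singleton.mp this
  -- kernel of the principal submatrix has dimension ≥ 2
  set B := principalSub A I with hB
  set L := B.mulVecLin with hL
  have hrn : Module.finrank ℝ (LinearMap.range L) + Module.finrank ℝ (LinearMap.ker L)
      = Module.finrank ℝ (↥I → ℝ) := LinearMap.finrank_range_add_finrank_ker L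
  have hdom : Module.finrank ℝ (↥I → ℝ) = n - 1 := by
    rw [Module.finrank_pi, Fintype.card_coe, hI]
  have hker2 : 2 ≤ Module.finrank ℝ (LinearMap.ker L) := by
    have : Module.finrank ℝ (LinearMap.range L) ≤ n - 3 := hr
    omega
  -- linear functional z ↦ ∑ j, z j * A j i0
  let φ : (↥I → ℝ) →ₗ[ℝ] ℝ :=
    { toFun := fun z => ∑ j : I, z j * A (j : Fin n) i0
      map_add' := fun u v => by simp [add_mul, Finset.sum_add_distrib]
      map_smul' := fun c u => by simp [Finset.mul_sum, mul_assoc] }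
  let ψ := φ.comp (LinearMap.ker L).subtype
  have hkerψ : 0 < Module.finrank ℝ (LinearMap.ker ψ) := by
    have h1 := LinearMap.finrank_range_add_finrank_ker ψ
    have h2 : Module.finrank ℝ (LinearMap.range ψ) ≤ 1 := by
      have := Submodule.finrank_le (LinearMap.range ψ)
      simpa using this
    omega
  have hne : LinearMap.ker ψ ≠ ⊥ := by
    intro h
    rw [h] at hkerψ
    simp at hkerψ
  obtain ⟨z, hzψ, hz0⟩ := Submodule.exists_mem_ne_zero_of_ne_bot hne
  have hzker : B *ᵥ (z : ↥I → ℝ) = 0 := z.2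
  have hzφ : ∑ j : I, (z : ↥I → ℝ) j * A (j : Fin n) i0 = 0 := hzψ
  have hzval : (z : ↥I → ℝ) ≠ 0 := fun h => hz0 (Subtype.ext h)
  -- extend z by zero
  classical
  set w : Fin n → ℝ := fun i => if h : i ∈ I then (z : ↥I → ℝ) ⟨i, h⟩ else 0 with hw
  have hsym' : ∀ i j, A i j = A j i := fun i j => by
    conv_lhs => rw [← hsymm]
    rfl
  have hwsum : ∀ i : Fin n, ∑ j, A i j * w j = ∑ j : I, A i (j : Fin n) * (z : ↥I → ℝ) j := by
    intro i
    rw [← Finset.sum_subset (Finset.subset_univ I)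
      (fun j _ hj => by rw [hw]; simp only [dif_neg hj, mul_zero])]
    rw [← Finset.sum_attach I (fun j => A i j * w j)]
    refine Finset.sum_congr rfl fun j _ => ?_
    congr 1
    rw [hw]
    simp only [dif_pos j.2]
  have hAw : A *ᵥ w = 0 := by
    funext i
    show ∑ j, A i j * w j = 0
    rw [hwsum i]
    by_cases hi : i ∈ I
    · have := congrFun hzker ⟨i, hi⟩
      simpa [mulVec, dotProduct, hB, principalSub, mulVecLin] using this
    · rw [hnotI i hi]
      rw [← hzφ]
      exact Finset.sum_congr rfl fun j _ => by rw [hsym' i0 j, mul_comm]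
  -- pick a coordinate where w is nonzero
  obtain ⟨j0', hj0'⟩ := Function.ne_iff.mp hzval
  set j0 : Fin n := (j0' : Fin n) with hj0
  have hwj0 : w j0 ≠ 0 := by
    simp only [hw]
    rw [dif_pos j0'.2]
    simpa using hj0'
  -- conclude psd
  rw [posSemidef_iff_dotProduct_mulVec]
  constructor
  · show Aᴴ = A
    rw [conjTranspose_eq_transpose_of_trivial]
    exact hsymm
  · intro x
    rw [show star x = x from funext fun i => star_trivial _]
    set c := x j0 / w j0 with hc
    set x' : Fin n → ℝ := x - c • w with hx'
    have hx'j0 : x' j0 = 0 := by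
      simp only [hx', Pi.sub_apply, Pi.smul_apply, smul_eq_mul, hc]
      rw [div_mul_cancel₀ _ hwj0]
      ring
    have hAx' : A *ᵥ x' = A *ᵥ x := by
      rw [hx', mulVec_sub, mulVec_smul, hAw]
      simp
    have hquad : x ⬝ᵥ (A *ᵥ x) = x' ⬝ᵥ (A *ᵥ x') := by
      rw [hAx', hx']
      rw [sub_dotProduct, smul_dotProduct]
      rw [dotProduct_mulVec w A x, ← Matrix.mulVec_transpose A w,
        show Aᵀ = A from hsymm, hAw]
      simp
    rw [hquad]
    set J : Finset (Fin n) := {j0}ᶜ with hJ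
    have hJc : J.card = n - 1 := by
      rw [hJ, Finset.card_compl, Finset.card_singleton, Fintype.card_fin]
    have hx'J : ∀ i ∉ J, x' i = 0 := by
      intro i hi
      have : i = j0 := by
        simpa [hJ, Finset.mem_compl] using hi
      rw [this]; exact hx'j0
    rw [quad_restrict A J x' hx'J]
    have := (hpsd J hJc).dotProduct_mulVec_nonneg (fun i : J => x' i)
    simpa using this
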